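/- Under the stated setting, assume conditions (3.3), (3.4), (3.5) hold for constants M, R, K, ω, δ > 0. Then there exists r̃ > 0 such that: for every T ∈ (0, r̃], every measurable d : [0,T] → D, and every absolutely continuous (x,y) : [0,T] → ℝⁿ×ℝ with x(0)'Px(0) < R² satisfying, for almost every t ∈ [0,T], ẋ(t) = Ax(t) + f(d(t),x(t),u₀) + b·u₀ and ẏ(t) = xₙ(t) + g(d(t),x(t),u₀) with the constant input u₀ = p'x(0) − Kc'b·sat(ω(y(0) + c'x(0))), it holds that x(t)'Px(t) < R² for all t ∈ [0,T]. -/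

import Mathlib

set_option maxHeartbeats 2000000


open Matrix MeasureTheory Set Filter Topology

noncomputable section

/-- The `m × m` matrix with ones on the subdiagonal and zeros elsewhere. -/
def matA (m : ℕ) : Matrix (Fin m) (Fin m) ℝ :=
  Matrix.of fun i j => if (i : ℕ) = (j : ℕ) + 1 then 1 else 0

/-- The vector `b = (1,0,…,0)'` as a plain function. -/
def vecbf (m : ℕ) : Fin m → ℝ := fun i => if (i : ℕ) = 0 then 1 else 0

/-- The vector `b = (1,0,…,0)'` in Euclidean space. -/
def vecb (m : ℕ) : EuclideanSpace ℝ (Fin m) := (WithLp.equiv 2 (Fin m → ℝ)).symm (vecbf m)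

/-- View a Euclidean vector as a plain function. -/
def ef {m : ℕ} (x : EuclideanSpace ℝ (Fin m)) : Fin m → ℝ := x

/-- Matrix-vector multiplication on Euclidean space. -/
def mulVecE {m : ℕ} (M : Matrix (Fin m) (Fin m) ℝ) (x : EuclideanSpace ℝ (Fin m)) :
    EuclideanSpace ℝ (Fin m) :=
  (WithLp.equiv 2 (Fin m → ℝ)).symm (M.mulVec (ef x))

/-- Euclidean inner product `x'y`. -/
def ip {m : ℕ} (x y : EuclideanSpace ℝ (Fin m)) : ℝ := ∑ i, x i * y i

/-- Quadratic form `x'Px`. -/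
def qf {m : ℕ} (P : Matrix (Fin m) (Fin m) ℝ) (x : EuclideanSpace ℝ (Fin m)) : ℝ :=
  ip x (mulVecE P x)

/-- The saturation function `sat(s) = s / max(1,|s|)`. -/
def sat (s : ℝ) : ℝ := s / max 1 |s|

/-- The vector `c = -(A' + pb')⁻¹ (0,…,0,1)'`. -/
def cvec (n : ℕ) (p : EuclideanSpace ℝ (Fin (n+1))) : EuclideanSpace ℝ (Fin (n+1)) :=
  (WithLp.equiv 2 (Fin (n+1) → ℝ)).symm
    (-((((matA (n+1))ᵀ + vecMulVec (ef p) (vecbf (n+1)))⁻¹).mulVec (Pi.single (Fin.last n) 1)))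

/-- Condition (3.3): `x'P(Ax + f(d,x,u) + bu) < 0` whenever `d ∈ D`, `x'Px = R²` and
`|u - p'x| ≤ K|c'b|`. -/
def Cond33 {l n : ℕ} (D : Set (EuclideanSpace ℝ (Fin l)))
    (f : EuclideanSpace ℝ (Fin l) → EuclideanSpace ℝ (Fin (n+1)) → ℝ → EuclideanSpace ℝ (Fin (n+1)))
    (P : Matrix (Fin (n+1)) (Fin (n+1)) ℝ) (p : EuclideanSpace ℝ (Fin (n+1))) (R K : ℝ) : Prop :=
  ∀ d ∈ D, ∀ x : EuclideanSpace ℝ (Fin (n+1)), ∀ u : ℝ,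
    qf P x = R ^ 2 → |u - ip p x| ≤ K * |ip (cvec n p) (vecb (n+1))| →
      ip x (mulVecE P (mulVecE (matA (n+1)) x + f d x u + u • vecb (n+1))) < 0

/-- Condition (3.4): `|g(d,x,u) + c'f(d,x,u)| < K(c'b)²` whenever `d ∈ D`, `x'Px ≤ R²` and
`|u - p'x| ≤ K|c'b|`. -/
def Cond34 {l n : ℕ} (D : Set (EuclideanSpace ℝ (Fin l)))
    (f : EuclideanSpace ℝ (Fin l) → EuclideanSpace ℝ (Fin (n+1)) → ℝ → EuclideanSpace ℝ (Fin (n+1)))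
    (g : EuclideanSpace ℝ (Fin l) → EuclideanSpace ℝ (Fin (n+1)) → ℝ → ℝ)
    (P : Matrix (Fin (n+1)) (Fin (n+1)) ℝ) (p : EuclideanSpace ℝ (Fin (n+1))) (R K : ℝ) : Prop :=
  ∀ d ∈ D, ∀ x : EuclideanSpace ℝ (Fin (n+1)), ∀ u : ℝ,
    qf P x ≤ R ^ 2 → |u - ip p x| ≤ K * |ip (cvec n p) (vecb (n+1))| →
      |g d x u + ip (cvec n p) (f d x u)| < K * (ip (cvec n p) (vecb (n+1))) ^ 2

/-- Condition (3.5). -/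
def Cond35 {l n : ℕ} (D : Set (EuclideanSpace ℝ (Fin l)))
    (f : EuclideanSpace ℝ (Fin l) → EuclideanSpace ℝ (Fin (n+1)) → ℝ → EuclideanSpace ℝ (Fin (n+1)))
    (g : EuclideanSpace ℝ (Fin l) → EuclideanSpace ℝ (Fin (n+1)) → ℝ → ℝ)
    (P : Matrix (Fin (n+1)) (Fin (n+1)) ℝ) (p : EuclideanSpace ℝ (Fin (n+1)))
    (M R K ω δ : ℝ) : Prop :=
  ∀ d ∈ D, ∀ x : EuclideanSpace ℝ (Fin (n+1)), ∀ z : ℝ,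
    qf P x ≤ R ^ 2 → ω * |z| ≤ 1 →
      ∀ u : ℝ, u = ip p x - K * ip (cvec n p) (vecb (n+1)) * ω * z →
        z * (M * g d x u + M * ip (cvec n p) (f d x u)
              - K * ip (cvec n p) (vecb (n+1)) * ω * ip (vecb (n+1)) (mulVecE P x))
          ≤ (M * K * (ip (cvec n p) (vecb (n+1))) ^ 2 * ω - δ) * z ^ 2
            - ip x (mulVecE P
                (mulVecE (matA (n+1) + vecMulVec (vecbf (n+1)) (ef p) + δ • 1) x + f d x u))

/- ### auxiliary lemmas -/

lemma key_fubini {f g : ℝ → ℝ} {a b : ℝ}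
    (hf : IntegrableOn f (Ioc a b) volume) (hg : IntegrableOn g (Ioc a b) volume) :
    (∫ s in Ioc a b, f s * ∫ r in Ioc a s, g r)
      + ∫ s in Ioc a b, (∫ r in Ioc a s, f r) * g s
    = (∫ s in Ioc a b, f s) * ∫ s in Ioc a b, g s := by
  set μ := volume.restrict (Ioc a b) with hμ
  have hfi : Integrable f μ := hf
  have hgi : Integrable g μ := hg
  set Φ : ℝ × ℝ → ℝ := fun z => if z.2 ≤ z.1 then f z.1 * g z.2 else 0 with hΦ
  set Ψ : ℝ × ℝ → ℝ := fun z => if z.2 < z.1 then f z.2 * g z.1 else 0 with hΨ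
  have hmle : MeasurableSet {z : ℝ × ℝ | z.2 ≤ z.1} :=
    (isClosed_le continuous_snd continuous_fst).measurableSet
  have hmlt : MeasurableSet {z : ℝ × ℝ | z.2 < z.1} :=
    (isOpen_lt continuous_snd continuous_fst).measurableSet
  have hfg : Integrable (fun z : ℝ × ℝ => f z.1 * g z.2) (μ.prod μ) := hfi.mul_prod hgi
  have hgf : Integrable (fun z : ℝ × ℝ => f z.2 * g z.1) (μ.prod μ) := by
    have := hgi.mul_prod hfi
    simpa [mul_comm] using this
  have hΦint : Integrable Φ (μ.prod μ) := by
    have := hfg.indicator hmle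
    have he : Φ = {z : ℝ × ℝ | z.2 ≤ z.1}.indicator (fun z => f z.1 * g z.2) := by
      funext z; by_cases h : z.2 ≤ z.1 <;> simp [hΦ, Set.indicator_apply, h]
    rw [he]; exact this
  have hΨint : Integrable Ψ (μ.prod μ) := by
    have := hgf.indicator hmlt
    have he : Ψ = {z : ℝ × ℝ | z.2 < z.1}.indicator (fun z => f z.2 * g z.1) := by
      funext z; by_cases h : z.2 < z.1 <;> simp [hΨ, Set.indicator_apply, h]
    rw [he]; exact this
  have hA1 : ∀ s ∈ Ioc a b, f s * (∫ r in Ioc a s, g r) = ∫ r, Φ (s, r) ∂μ := by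
    intro s hs
    have h1 : (fun r => Φ (s, r)) = fun r => f s * ((Iic s).indicator g r) := by
      funext r; by_cases h : r ≤ s <;> simp [hΦ, Set.indicator_apply, h]
    rw [h1, integral_const_mul, integral_indicator measurableSet_Iic, hμ,
      Measure.restrict_restrict measurableSet_Iic]
    have : Iic s ∩ Ioc a b = Ioc a s := by
      ext r
      simp only [mem_inter_iff, mem_Iic, mem_Ioc]
      exact ⟨fun ⟨h1, h2, _⟩ => ⟨h2, h1⟩, fun ⟨h1, h2⟩ => ⟨h2, h1, h2.trans hs.2⟩⟩
    rw [this]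
  have hB1 : ∀ s ∈ Ioc a b, (∫ r in Ioc a s, f r) * g s = ∫ r, Ψ (s, r) ∂μ := by
    intro s hs
    have h1 : (fun r => Ψ (s, r)) = fun r => ((Iio s).indicator f r) * g s := by
      funext r; by_cases h : r < s <;> simp [hΨ, Set.indicator_apply, h]
    rw [h1, integral_mul_const, integral_indicator measurableSet_Iio, hμ,
      Measure.restrict_restrict measurableSet_Iio]
    have h2 : Iio s ∩ Ioc a b = Ioo a s := by
      ext r
      simp only [mem_inter_iff, mem_Iio, mem_Ioc, mem_Ioo]
      exact ⟨fun ⟨h1, h2, _⟩ => ⟨h2, h1⟩, fun ⟨h1, h2⟩ => ⟨h2, h1, (le_of_lt h2).trans hs.2⟩⟩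
    rw [h2, ← integral_Ioc_eq_integral_Ioo]
  have hAeq : (∫ s in Ioc a b, f s * ∫ r in Ioc a s, g r)
      = ∫ s, (∫ r, Φ (s, r) ∂μ) ∂μ := by
    refine integral_congr_ae ?_
    filter_upwards [ae_restrict_mem measurableSet_Ioc] with s hs using hA1 s hs
  have hBeq : (∫ s in Ioc a b, (∫ r in Ioc a s, f r) * g s)
      = ∫ s, (∫ r, Ψ (s, r) ∂μ) ∂μ := by
    refine integral_congr_ae ?_
    filter_upwards [ae_restrict_mem measurableSet_Ioc] with s hs using hB1 s hs
  have hswap : ∫ s, (∫ r, Ψ (s, r) ∂μ) ∂μ = ∫ s, (∫ r, Ψ (r, s) ∂μ) ∂μ :=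
    integral_integral_swap hΨint
  have hint1 : Integrable (fun s => ∫ r, Φ (s, r) ∂μ) μ := hΦint.integral_prod_left
  have hint2 : Integrable (fun s => ∫ r, Ψ (r, s) ∂μ) μ := hΨint.integral_prod_right
  rw [hAeq, hBeq, hswap, ← integral_add hint1 hint2]
  have hpt : ∀ s : ℝ, (∫ r, Φ (s, r) ∂μ) + (∫ r, Ψ (r, s) ∂μ) = f s * ∫ r, g r ∂μ := by
    intro s
    have e1 : (fun r => Φ (s, r)) = (Iic s).indicator (fun r => f s * g r) := by
      funext r; by_cases h : r ≤ s <;> simp [hΦ, Set.indicator_apply, h]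
    have e2 : (fun r => Ψ (r, s)) = (Ioi s).indicator (fun r => f s * g r) := by
      funext r; by_cases h : s < r <;> simp [hΨ, Set.indicator_apply, h]
    have i1 : Integrable ((Iic s).indicator (fun r => f s * g r)) μ :=
      (hgi.const_mul (f s)).indicator measurableSet_Iic
    have i2 : Integrable ((Ioi s).indicator (fun r => f s * g r)) μ :=
      (hgi.const_mul (f s)).indicator measurableSet_Ioi
    rw [e1, e2, ← integral_add i1 i2, ← integral_const_mul]
    congr 1
    funext r
    by_cases h : r ≤ s
    · simp [Set.indicator_apply, h, not_lt.mpr h]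
    · simp [Set.indicator_apply, h, lt_of_not_ge h]
  have he : (fun s => (∫ r, Φ (s, r) ∂μ) + (∫ r, Ψ (r, s) ∂μ))
      = fun s => f s * ∫ r, g r ∂μ := funext hpt
  rw [he, integral_mul_const]

lemma scalar_prod {f g : ℝ → ℝ} {b : ℝ} (hb : 0 ≤ b)
    (hf : IntervalIntegrable f volume 0 b) (hg : IntervalIntegrable g volume 0 b) (Fa Ga : ℝ) :
    (Fa + ∫ s in (0:ℝ)..b, f s) * (Ga + ∫ s in (0:ℝ)..b, g s)
      = Fa * Ga + ∫ s in (0:ℝ)..b,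
          (f s * (Ga + ∫ r in (0:ℝ)..s, g r) + (Fa + ∫ r in (0:ℝ)..s, f r) * g s) := by
  have hmem : (0:ℝ) ∈ uIcc (0:ℝ) b := left_mem_uIcc
  have hcg : ContinuousOn (fun s => ∫ r in (0:ℝ)..s, g r) (uIcc (0:ℝ) b) :=
    intervalIntegral.continuousOn_primitive_interval' hg hmem
  have hcf : ContinuousOn (fun s => ∫ r in (0:ℝ)..s, f r) (uIcc (0:ℝ) b) :=
    intervalIntegral.continuousOn_primitive_interval' hf hmem
  have h1 : IntervalIntegrable (fun s => f s * (Ga + ∫ r in (0:ℝ)..s, g r)) volume 0 b :=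
    hf.mul_continuousOn (continuousOn_const.add hcg)
  have h2 : IntervalIntegrable (fun s => (Fa + ∫ r in (0:ℝ)..s, f r) * g s) volume 0 b :=
    hg.continuousOn_mul (continuousOn_const.add hcf)
  have h1a : IntervalIntegrable (fun s => f s * Ga) volume 0 b := hf.mul_const Ga
  have h1b : IntervalIntegrable (fun s => f s * ∫ r in (0:ℝ)..s, g r) volume 0 b :=
    hf.mul_continuousOn hcg
  have h2a : IntervalIntegrable (fun s => Fa * g s) volume 0 b := hg.const_mul Fa
  have h2b : IntervalIntegrable (fun s => (∫ r in (0:ℝ)..s, f r) * g s) volume 0 b :=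
    hg.continuousOn_mul hcf
  rw [intervalIntegral.integral_add h1 h2]
  have e1 : ∀ s : ℝ, f s * (Ga + ∫ r in (0:ℝ)..s, g r)
      = f s * Ga + f s * ∫ r in (0:ℝ)..s, g r := fun s => mul_add _ _ _
  have e2 : ∀ s : ℝ, (Fa + ∫ r in (0:ℝ)..s, f r) * g s
      = Fa * g s + (∫ r in (0:ℝ)..s, f r) * g s := fun s => add_mul _ _ _
  rw [intervalIntegral.integral_congr (fun s _ => e1 s),
    intervalIntegral.integral_congr (fun s _ => e2 s),
    intervalIntegral.integral_add h1a h1b, intervalIntegral.integral_add h2a h2b,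
    intervalIntegral.integral_mul_const, intervalIntegral.integral_const_mul]
  have hfIoc : IntegrableOn f (Ioc 0 b) volume := by
    rw [intervalIntegrable_iff_integrableOn_Ioc_of_le hb] at hf; exact hf
  have hgIoc : IntegrableOn g (Ioc 0 b) volume := by
    rw [intervalIntegrable_iff_integrableOn_Ioc_of_le hb] at hg; exact hg
  have key := key_fubini hfIoc hgIoc
  have c1 : (∫ s in (0:ℝ)..b, f s * ∫ r in (0:ℝ)..s, g r)
      = ∫ s in Ioc (0:ℝ) b, f s * ∫ r in Ioc (0:ℝ) s, g r := by
    rw [intervalIntegral.integral_of_le hb]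
    refine setIntegral_congr_ae measurableSet_Ioc ?_
    filter_upwards with s hs
    rw [intervalIntegral.integral_of_le hs.1.le]
  have c2 : (∫ s in (0:ℝ)..b, (∫ r in (0:ℝ)..s, f r) * g s)
      = ∫ s in Ioc (0:ℝ) b, (∫ r in Ioc (0:ℝ) s, f r) * g s := by
    rw [intervalIntegral.integral_of_le hb]
    refine setIntegral_congr_ae measurableSet_Ioc ?_
    filter_upwards with s hs
    rw [intervalIntegral.integral_of_le hs.1.le]
  have c3 : (∫ s in (0:ℝ)..b, f s) = ∫ s in Ioc (0:ℝ) b, f s :=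
    intervalIntegral.integral_of_le hb
  have c4 : (∫ s in (0:ℝ)..b, g s) = ∫ s in Ioc (0:ℝ) b, g s :=
    intervalIntegral.integral_of_le hb
  rw [c1, c2, c3, c4]
  nlinarith [key]

lemma ip_mulVecE_sum {m : ℕ} (P : Matrix (Fin m) (Fin m) ℝ) (x y : EuclideanSpace ℝ (Fin m)) :
    ip x (mulVecE P y) = ∑ i, ∑ j, P i j * (x i * y j) := by
  simp only [ip, mulVecE, ef, Matrix.mulVec, dotProduct, WithLp.equiv_symm_apply, PiLp.toLp_apply,
    Finset.mul_sum]
  exact Finset.sum_congr rfl fun i _ => Finset.sum_congr rfl fun j _ => by ring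

lemma intervalIntegrable_proj {m : ℕ} {v : ℝ → EuclideanSpace ℝ (Fin m)} {a b : ℝ}
    (hv : IntervalIntegrable v volume a b) (i : Fin m) :
    IntervalIntegrable (fun s => v s i) volume a b :=
  ⟨(EuclideanSpace.proj (𝕜 := ℝ) i).integrable_comp hv.1,
   (EuclideanSpace.proj (𝕜 := ℝ) i).integrable_comp hv.2⟩

lemma intervalIntegrable_finsum {ι : Type*} [Fintype ι] {F : ι → ℝ → ℝ} {a b : ℝ}
    (h : ∀ i, IntervalIntegrable (F i) volume a b) :
    IntervalIntegrable (fun s => ∑ i, F i s) volume a b := by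
  have h2 := IntervalIntegrable.sum (μ := volume) (a := a) (b := b) Finset.univ
    (f := F) (fun i _ => h i)
  have he : (∑ i, F i) = fun s => ∑ i, F i s := by funext s; simp
  rwa [he] at h2

lemma qf_identity {m : ℕ} (P : Matrix (Fin m) (Fin m) ℝ) (hsym : Pᵀ = P) {T : ℝ}
    (v : ℝ → EuclideanSpace ℝ (Fin m)) (hv : IntervalIntegrable v volume 0 T)
    (X : ℝ → EuclideanSpace ℝ (Fin m))
    (hX : ∀ t ∈ Icc (0:ℝ) T, X t = X 0 + ∫ s in (0:ℝ)..t, v s) :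
    ∀ t ∈ Icc (0:ℝ) T,
      qf P (X t) = qf P (X 0) + ∫ s in (0:ℝ)..t, 2 * ip (X s) (mulVecE P (v s)) := by
  intro t ht
  have hsub : uIcc (0:ℝ) t ⊆ uIcc (0:ℝ) T := by
    rw [uIcc_of_le ht.1, uIcc_of_le (ht.1.trans ht.2)]
    exact Icc_subset_Icc le_rfl ht.2
  have hvt : IntervalIntegrable v volume 0 t := hv.mono_set hsub
  have hvi : ∀ i, IntervalIntegrable (fun s => v s i) volume 0 t :=
    fun i => intervalIntegrable_proj hvt i
  have hXapp : ∀ s ∈ Icc (0:ℝ) T, ∀ i, X s i = X 0 i + ∫ r in (0:ℝ)..s, v r i := by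
    intro s hs i
    rw [hX s hs]
    have h1 : (X 0 + ∫ r in (0:ℝ)..s, v r) i = X 0 i + (∫ r in (0:ℝ)..s, v r) i := rfl
    rw [h1]
    congr 1
    have hvs : IntervalIntegrable v volume 0 s := hv.mono_set (by
      rw [uIcc_of_le hs.1, uIcc_of_le (hs.1.trans hs.2)]
      exact Icc_subset_Icc le_rfl hs.2)
    have := (EuclideanSpace.proj (𝕜 := ℝ) i).intervalIntegral_comp_comm hvs
    simpa using this.symm
  set Y : Fin m → ℝ → ℝ := fun i s => X 0 i + ∫ r in (0:ℝ)..s, v r i with hY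
  have hYcont : ∀ i, ContinuousOn (Y i) (uIcc (0:ℝ) t) := fun i =>
    continuousOn_const.add
      (intervalIntegral.continuousOn_primitive_interval' (hvi i) left_mem_uIcc)
  have hYX : ∀ s ∈ Icc (0:ℝ) t, ∀ i, Y i s = X s i := by
    intro s hs i
    exact (hXapp s (Icc_subset_Icc le_rfl ht.2 hs) i).symm
  have hij : ∀ i j, X t i * X t j
      = X 0 i * X 0 j + ∫ s in (0:ℝ)..t, (v s i * Y j s + Y i s * v s j) := by
    intro i j
    have := scalar_prod ht.1 (hvi i) (hvi j) (X 0 i) (X 0 j)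
    rw [← hXapp t ht i, ← hXapp t ht j] at this
    exact this
  have hφint : ∀ i j, IntervalIntegrable
      (fun s => v s i * Y j s + Y i s * v s j) volume 0 t := fun i j =>
    ((hvi i).mul_continuousOn (hYcont j)).add ((hvi j).continuousOn_mul (hYcont i))
  have hq : ∀ z, qf P z = ∑ i, ∑ j, P i j * (z i * z j) := fun z => ip_mulVecE_sum P z z
  rw [hq, hq]
  have step1 : ∑ i, ∑ j, P i j * (X t i * X t j)
      = ∑ i, ∑ j, (P i j * (X 0 i * X 0 j)
          + ∫ s in (0:ℝ)..t, P i j * (v s i * Y j s + Y i s * v s j)) := by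
    refine Finset.sum_congr rfl fun i _ => Finset.sum_congr rfl fun j _ => ?_
    rw [hij i j, mul_add, intervalIntegral.integral_const_mul]
  rw [step1]
  rw [Finset.sum_congr rfl fun i _ => Finset.sum_add_distrib, Finset.sum_add_distrib]
  congr 1
  have hPφint : ∀ i j, IntervalIntegrable
      (fun s => P i j * (v s i * Y j s + Y i s * v s j)) volume 0 t :=
    fun i j => (hφint i j).const_mul _
  have swap1 : ∑ i, ∑ j, ∫ s in (0:ℝ)..t, P i j * (v s i * Y j s + Y i s * v s j)
      = ∫ s in (0:ℝ)..t, ∑ i, ∑ j, P i j * (v s i * Y j s + Y i s * v s j) := by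
    calc ∑ i, ∑ j, ∫ s in (0:ℝ)..t, P i j * (v s i * Y j s + Y i s * v s j)
        = ∑ i, ∫ s in (0:ℝ)..t, ∑ j, P i j * (v s i * Y j s + Y i s * v s j) :=
          Finset.sum_congr rfl fun i _ =>
            (intervalIntegral.integral_finset_sum fun j _ => hPφint i j).symm
      _ = ∫ s in (0:ℝ)..t, ∑ i, ∑ j, P i j * (v s i * Y j s + Y i s * v s j) := by
          have hGint : ∀ i : Fin m, IntervalIntegrable
              (fun s => ∑ j, P i j * (v s i * Y j s + Y i s * v s j)) volume 0 t :=
            fun i => intervalIntegrable_finsum fun j => hPφint i j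
          exact (intervalIntegral.integral_finset_sum
            (f := fun i s => ∑ j, P i j * (v s i * Y j s + Y i s * v s j))
            (fun i _ => hGint i)).symm
  rw [swap1]
  refine intervalIntegral.integral_congr fun s hs => ?_
  have hs' : s ∈ Icc (0:ℝ) t := by rwa [uIcc_of_le ht.1] at hs
  have hYX' : ∀ i, Y i s = X s i := hYX s hs'
  simp only [hYX']
  rw [ip_mulVecE_sum, Finset.mul_sum]
  rw [Finset.sum_congr rfl fun i (_ : i ∈ Finset.univ) => (Finset.mul_sum _ _ _)]
  have hPsym : ∀ i j, P j i = P i j := fun i j => by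
    conv_lhs => rw [← hsym]
    rfl
  have key2 : ∑ i, ∑ j, P i j * (v s i * X s j) = ∑ i, ∑ j, P i j * (X s i * v s j) := by
    rw [Finset.sum_comm]
    exact Finset.sum_congr rfl fun i _ => Finset.sum_congr rfl fun j _ => by
      rw [hPsym i j]; ring
  calc ∑ i, ∑ j, P i j * (v s i * X s j + X s i * v s j)
      = (∑ i, ∑ j, P i j * (v s i * X s j)) + ∑ i, ∑ j, P i j * (X s i * v s j) := by
        rw [← Finset.sum_add_distrib]
        exact Finset.sum_congr rfl fun i _ => by
          rw [← Finset.sum_add_distrib]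
          exact Finset.sum_congr rfl fun j _ => mul_add _ _ _
    _ = ∑ i, ∑ j, 2 * (P i j * (X s i * v s j)) := by
        rw [key2, ← two_mul, Finset.mul_sum]
        exact Finset.sum_congr rfl fun i _ => by
          rw [Finset.mul_sum]

lemma abs_sat_le_one (s : ℝ) : |sat s| ≤ 1 := by
  have h1 : (0:ℝ) < max 1 |s| := lt_of_lt_of_le one_pos (le_max_left _ _)
  rw [sat, abs_div, abs_of_pos h1, div_le_one h1]
  exact le_max_right _ _

lemma ip_eq_inner {m : ℕ} (x y : EuclideanSpace ℝ (Fin m)) : ip x y = (inner ℝ x y : ℝ) := by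
  simp [ip, PiLp.inner_apply, RCLike.inner_apply, mul_comm]

lemma abs_ip_sub_le {m : ℕ} (p x y : EuclideanSpace ℝ (Fin m)) :
    |ip p x - ip p y| ≤ ‖p‖ * ‖x - y‖ := by
  rw [ip_eq_inner, ip_eq_inner, ← inner_sub_right]
  exact abs_real_inner_le_norm _ _

lemma continuous_qf {m : ℕ} (P : Matrix (Fin m) (Fin m) ℝ) :
    Continuous (fun x : EuclideanSpace ℝ (Fin m) => qf P x) := by
  have h : (fun x : EuclideanSpace ℝ (Fin m) => qf P x)
      = fun x => ∑ i, ∑ j, P i j * (x i * x j) := funext fun x => ip_mulVecE_sum P x x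
  rw [h]
  exact continuous_finset_sum _ fun i _ => continuous_finset_sum _ fun j _ =>
    continuous_const.mul
      ((EuclideanSpace.proj (𝕜 := ℝ) i).continuous.mul (EuclideanSpace.proj (𝕜 := ℝ) j).continuous)

lemma continuous_ip_pair {m : ℕ} :
    Continuous (fun q : EuclideanSpace ℝ (Fin m) × EuclideanSpace ℝ (Fin m) => ip q.1 q.2) :=
  continuous_finset_sum _ fun i _ =>
    ((EuclideanSpace.proj (𝕜 := ℝ) i).continuous.comp continuous_fst).mul
      ((EuclideanSpace.proj (𝕜 := ℝ) i).continuous.comp continuous_snd)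

lemma continuous_ip_right {m : ℕ} (p : EuclideanSpace ℝ (Fin m)) :
    Continuous (fun x : EuclideanSpace ℝ (Fin m) => ip p x) :=
  continuous_finset_sum _ fun i _ =>
    continuous_const.mul (EuclideanSpace.proj (𝕜 := ℝ) i).continuous

lemma continuous_mulVecE {m : ℕ} (M : Matrix (Fin m) (Fin m) ℝ) :
    Continuous (fun x : EuclideanSpace ℝ (Fin m) => mulVecE M x) := by
  have h1 : Continuous fun y : Fin m → ℝ => M.mulVec y := by
    apply continuous_pi; intro i
    have h : (fun y : Fin m → ℝ => M.mulVec y i) = fun y => ∑ j, M i j * y j := rfl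
    rw [h]
    exact continuous_finset_sum _ fun j _ => continuous_const.mul (continuous_apply j)
  exact (PiLp.continuous_toLp 2 (fun _ : Fin m => ℝ)).comp
    (h1.comp (PiLp.continuous_ofLp 2 (fun _ : Fin m => ℝ)))

lemma qf_smul {m : ℕ} (P : Matrix (Fin m) (Fin m) ℝ) (c : ℝ) (x : EuclideanSpace ℝ (Fin m)) :
    qf P (c • x) = c ^ 2 * qf P x := by
  have h : ∀ z : EuclideanSpace ℝ (Fin m), qf P z = ∑ i, ∑ j, P i j * (z i * z j) :=
    fun z => ip_mulVecE_sum P z z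
  rw [h, h, Finset.mul_sum]
  refine Finset.sum_congr rfl fun i _ => ?_
  rw [Finset.mul_sum]
  refine Finset.sum_congr rfl fun j _ => ?_
  have hs : ∀ k : Fin m, (c • x) k = c * x k := fun k => rfl
  rw [hs, hs]; ring

lemma qf_zero {m : ℕ} (P : Matrix (Fin m) (Fin m) ℝ) :
    qf P (0 : EuclideanSpace ℝ (Fin m)) = 0 := by
  have h := ip_mulVecE_sum P (0 : EuclideanSpace ℝ (Fin m)) 0
  have hz : ∀ k : Fin m, (0 : EuclideanSpace ℝ (Fin m)) k = 0 := fun k => rfl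
  simp only [qf, h, hz, mul_zero, zero_mul, Finset.sum_const_zero]

lemma qf_posdef {m : ℕ} {P : Matrix (Fin m) (Fin m) ℝ} (hP : P.PosDef)
    {x : EuclideanSpace ℝ (Fin m)} (hx : x ≠ 0) : 0 < qf P x := by
  have := hP.dotProduct_mulVec_pos (x := ef x) (fun h => hx (by ext i; exact congrFun h i))
  simpa [dotProduct, star_trivial, qf, ip, mulVecE, ef, WithLp.equiv_symm_apply, PiLp.toLp_apply] using this

lemma isCompact_sublevel {n : ℕ} {P : Matrix (Fin (n+1)) (Fin (n+1)) ℝ} (hP : P.PosDef) (R : ℝ) :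
    IsCompact {x : EuclideanSpace ℝ (Fin (n+1)) | qf P x ≤ R ^ 2} := by
  set E := EuclideanSpace ℝ (Fin (n+1))
  have hclosed : IsClosed {x : E | qf P x ≤ R ^ 2} :=
    isClosed_Iic.preimage (continuous_qf P)
  have hsph : IsCompact (Metric.sphere (0 : E) 1) := isCompact_sphere _ _
  have hsne : (Metric.sphere (0 : E) 1).Nonempty := NormedSpace.sphere_nonempty.mpr zero_le_one
  obtain ⟨x0, hx0mem, hx0min⟩ := hsph.exists_isMinOn hsne (continuous_qf P).continuousOn
  have hx0norm : ‖x0‖ = 1 := by simpa using hx0mem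
  have hμpos : 0 < qf P x0 := qf_posdef hP (by
    intro h; rw [h] at hx0norm; simp at hx0norm)
  set μ := qf P x0 with hμ
  have hcoer : ∀ x : E, μ * ‖x‖ ^ 2 ≤ qf P x := by
    intro x
    rcases eq_or_ne x 0 with rfl | hx
    · simp [qf_zero]
    · have hnx : (0:ℝ) < ‖x‖ := norm_pos_iff.mpr hx
      have hy : (‖x‖⁻¹ • x) ∈ Metric.sphere (0 : E) 1 := by
        simp [norm_smul, abs_of_pos (inv_pos.mpr hnx), inv_mul_cancel₀ hnx.ne']
      have h1 : μ ≤ qf P (‖x‖⁻¹ • x) := hx0min hy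
      have h2 : qf P (‖x‖⁻¹ • x) = (‖x‖⁻¹) ^ 2 * qf P x := qf_smul P _ x
      rw [h2] at h1
      have h3 : μ * ‖x‖ ^ 2 ≤ (‖x‖⁻¹) ^ 2 * qf P x * ‖x‖ ^ 2 := by nlinarith
      calc μ * ‖x‖ ^ 2 ≤ (‖x‖⁻¹) ^ 2 * qf P x * ‖x‖ ^ 2 := h3
        _ = qf P x := by field_simp
  have hsub : {x : E | qf P x ≤ R ^ 2} ⊆ Metric.closedBall 0 (Real.sqrt (R ^ 2 / μ)) := by
    intro x hx
    have h1 : μ * ‖x‖ ^ 2 ≤ R ^ 2 := (hcoer x).trans hx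
    have h2 : ‖x‖ ^ 2 ≤ R ^ 2 / μ := by
      rw [le_div_iff₀ hμpos]; nlinarith
    have h3 := Real.sqrt_le_sqrt h2
    rw [Real.sqrt_sq (norm_nonneg x)] at h3
    simpa [Metric.mem_closedBall, dist_zero_right] using h3
  exact (isCompact_closedBall _ _).of_isClosed_subset hclosed hsub

lemma phi_integrable {m : ℕ} (P : Matrix (Fin m) (Fin m) ℝ) {a b : ℝ}
    {X : ℝ → EuclideanSpace ℝ (Fin m)} (hX : ContinuousOn X (uIcc a b))
    {v : ℝ → EuclideanSpace ℝ (Fin m)} (hv : IntervalIntegrable v volume a b) :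
    IntervalIntegrable (fun s => 2 * ip (X s) (mulVecE P (v s))) volume a b := by
  have h : (fun s => 2 * ip (X s) (mulVecE P (v s)))
      = fun s => ∑ i, ∑ j, (2 * P i j) * (X s i * v s j) := by
    funext s
    rw [ip_mulVecE_sum, Finset.mul_sum]
    refine Finset.sum_congr rfl fun i _ => ?_
    rw [Finset.mul_sum]
    exact Finset.sum_congr rfl fun j _ => by ring
  rw [h]
  refine intervalIntegrable_finsum fun i => intervalIntegrable_finsum fun j => ?_
  have hXi : ContinuousOn (fun s => X s i) (uIcc a b) :=
    (EuclideanSpace.proj (𝕜 := ℝ) i).continuous.comp_continuousOn hX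
  exact ((intervalIntegrable_proj hv j).continuousOn_mul hXi).const_mul _

/-- **Lemma 3.2.** Under conditions (3.3)–(3.5), for sufficiently small `r̃ > 0`, any solution
of (3.7) on one sampling interval `[0,T]` (`T ≤ r̃`) with constant input
`u₀ = p'x(0) - Kc'b·sat(ω(y(0)+c'x(0)))` and `x(0)'Px(0) < R²` satisfies `x(t)'Px(t) < R²`
on `[0,T]`. -/
theorem lemma_3_2 (n l : ℕ)
    (D : Set (EuclideanSpace ℝ (Fin l))) (hD : D.Nonempty) (hDc : IsCompact D)
    (f : EuclideanSpace ℝ (Fin l) → EuclideanSpace ℝ (Fin (n+1)) → ℝ → EuclideanSpace ℝ (Fin (n+1)))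
    (g : EuclideanSpace ℝ (Fin l) → EuclideanSpace ℝ (Fin (n+1)) → ℝ → ℝ)
    (hfLip : LocallyLipschitz
      (fun q : EuclideanSpace ℝ (Fin l) × EuclideanSpace ℝ (Fin (n+1)) × ℝ => f q.1 q.2.1 q.2.2))
    (hgLip : LocallyLipschitz
      (fun q : EuclideanSpace ℝ (Fin l) × EuclideanSpace ℝ (Fin (n+1)) × ℝ => g q.1 q.2.1 q.2.2))
    (hf0 : ∀ d ∈ D, f d 0 0 = 0) (hg0 : ∀ d ∈ D, g d 0 0 = 0)
    (P : Matrix (Fin (n+1)) (Fin (n+1)) ℝ) (hP : P.PosDef)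
    (p : EuclideanSpace ℝ (Fin (n+1)))
    (hneg : (-(P * (matA (n+1) + vecMulVec (vecbf (n+1)) (ef p))
        + ((matA (n+1))ᵀ + vecMulVec (ef p) (vecbf (n+1))) * P)).PosDef)
    (M R K ω δ : ℝ) (hM : 0 < M) (hR : 0 < R) (hK : 0 < K) (hω : 0 < ω) (hδ : 0 < δ)
    (h33 : Cond33 D f P p R K) (h34 : Cond34 D f g P p R K)
    (h35 : Cond35 D f g P p M R K ω δ) :
    ∃ rt : ℝ, 0 < rt ∧
      ∀ T : ℝ, 0 < T → T ≤ rt →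
      ∀ d : ℝ → EuclideanSpace ℝ (Fin l), Measurable d → (∀ t ∈ Icc (0:ℝ) T, d t ∈ D) →
      ∀ (x : ℝ → EuclideanSpace ℝ (Fin (n+1))) (y : ℝ → ℝ)
        (x' : ℝ → EuclideanSpace ℝ (Fin (n+1))) (y' : ℝ → ℝ),
        IntervalIntegrable x' volume 0 T → IntervalIntegrable y' volume 0 T →
        (∀ t ∈ Icc (0:ℝ) T, x t = x 0 + ∫ s in (0:ℝ)..t, x' s) →
        (∀ t ∈ Icc (0:ℝ) T, y t = y 0 + ∫ s in (0:ℝ)..t, y' s) →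
        qf P (x 0) < R ^ 2 →
        ∀ u0 : ℝ,
          u0 = ip p (x 0)
              - K * ip (cvec n p) (vecb (n+1)) * sat (ω * (y 0 + ip (cvec n p) (x 0))) →
        (∀ᵐ t ∂(volume.restrict (Icc (0:ℝ) T)),
          x' t = mulVecE (matA (n+1)) (x t) + f (d t) (x t) u0 + u0 • vecb (n+1) ∧
          y' t = x t (Fin.last n) + g (d t) (x t) u0) →
        ∀ t ∈ Icc (0:ℝ) T, qf P (x t) < R ^ 2 := by
  classical
  set κ : ℝ := K * |ip (cvec n p) (vecb (n+1))| with hκdef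
  have hκ0 : 0 ≤ κ := mul_nonneg hK.le (abs_nonneg _)
  set S : Set (EuclideanSpace ℝ (Fin (n+1))) := {x | qf P x ≤ R ^ 2} with hSdef
  have hScomp : IsCompact S := isCompact_sublevel hP R
  have h0S : (0 : EuclideanSpace ℝ (Fin (n+1))) ∈ S := by
    simp only [hSdef, mem_setOf_eq, qf_zero]
    positivity
  obtain ⟨xc, hxcS, hxcmax⟩ := hScomp.exists_isMaxOn ⟨0, h0S⟩
    ((continuous_ip_right p).abs.continuousOn)
  set c0 : ℝ := |ip p xc| with hc0def
  have hc00 : 0 ≤ c0 := abs_nonneg _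
  have hc0 : ∀ z ∈ S, |ip p z| ≤ c0 := fun z hz => hxcmax hz
  have hQcomp : IsCompact (D ×ˢ (S ×ˢ Icc (-(c0 + κ + 1)) (c0 + κ + 1))) :=
    hDc.prod (hScomp.prod isCompact_Icc)
  set G : EuclideanSpace ℝ (Fin l) × EuclideanSpace ℝ (Fin (n+1)) × ℝ
      → EuclideanSpace ℝ (Fin (n+1)) := fun q =>
    mulVecE (matA (n+1)) q.2.1 + f q.1 q.2.1 q.2.2 + q.2.2 • vecb (n+1) with hGdef
  have hGcont : Continuous G := by
    refine Continuous.add (Continuous.add ?_ ?_) ?_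
    · exact (continuous_mulVecE (matA (n+1))).comp (continuous_fst.comp continuous_snd)
    · exact hfLip.continuous
    · exact (continuous_snd.comp continuous_snd).smul continuous_const
  set F : EuclideanSpace ℝ (Fin l) × EuclideanSpace ℝ (Fin (n+1)) × ℝ → ℝ :=
    fun q => ip q.2.1 (mulVecE P (G q)) with hFdef
  have hFcont : Continuous F :=
    continuous_ip_pair.comp ((continuous_fst.comp continuous_snd).prodMk
      ((continuous_mulVecE P).comp hGcont))
  obtain ⟨L, hL⟩ := hQcomp.exists_bound_of_continuousOn hGcont.continuousOn
  obtain ⟨d0, hd0⟩ := hD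
  have h0U : (0:ℝ) ∈ Icc (-(c0 + κ + 1)) (c0 + κ + 1) :=
    mem_Icc.mpr ⟨by linarith, by linarith⟩
  have hL0 : 0 ≤ L := (norm_nonneg _).trans (hL (d0, 0, 0) ⟨hd0, h0S, h0U⟩)
  -- the margin η from condition (3.3) by compactness
  set Z : ℕ → Set (EuclideanSpace ℝ (Fin l) × EuclideanSpace ℝ (Fin (n+1)) × ℝ) := fun k =>
    {q | q.1 ∈ D ∧ R ^ 2 - 1/(k+1 : ℝ) ≤ qf P q.2.1 ∧ qf P q.2.1 ≤ R ^ 2 ∧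
         |q.2.2 - ip p q.2.1| ≤ κ + 1/(k+1 : ℝ)} with hZdef
  have hqfc : Continuous
      (fun q : EuclideanSpace ℝ (Fin l) × EuclideanSpace ℝ (Fin (n+1)) × ℝ => qf P q.2.1) :=
    (continuous_qf P).comp (continuous_fst.comp continuous_snd)
  have habsc : Continuous
      (fun q : EuclideanSpace ℝ (Fin l) × EuclideanSpace ℝ (Fin (n+1)) × ℝ
        => |q.2.2 - ip p q.2.1|) :=
    ((continuous_snd.comp continuous_snd).sub
      ((continuous_ip_right p).comp (continuous_fst.comp continuous_snd))).abs
  have hZclosed : ∀ k, IsClosed (Z k) := by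
    intro k
    have he : Z k = Prod.fst ⁻¹' D
        ∩ ({q | R ^ 2 - 1/(k+1 : ℝ) ≤ qf P q.2.1}
          ∩ ({q | qf P q.2.1 ≤ R ^ 2} ∩ {q | |q.2.2 - ip p q.2.1| ≤ κ + 1/(k+1 : ℝ)})) := rfl
    rw [he]
    refine (hDc.isClosed.preimage continuous_fst).inter ?_
    refine (isClosed_le continuous_const hqfc).inter ?_
    exact (isClosed_le hqfc continuous_const).inter (isClosed_le habsc continuous_const)
  have hsclosed : IsClosed (Z 0 ∩ {q | 0 ≤ F q}) :=
    (hZclosed 0).inter (isClosed_le continuous_const hFcont)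
  have hssub : Z 0 ∩ {q | 0 ≤ F q} ⊆ D ×ˢ (S ×ˢ Icc (-(c0 + κ + 1)) (c0 + κ + 1)) := by
    rintro ⟨dd, xx, uu⟩ ⟨⟨hd, h1, h2, h3⟩, -⟩
    refine ⟨hd, h2, ?_⟩
    have h3' : |uu - ip p xx| ≤ κ + 1 := by
      have hc : (1:ℝ)/((0:ℕ)+1 : ℝ) = 1 := by norm_num
      rw [hc] at h3
      exact h3
    have h5 : |ip p xx| ≤ c0 := hc0 xx h2
    have h6 : |uu| ≤ c0 + κ + 1 := by
      calc |uu| = |(uu - ip p xx) + ip p xx| := by ring_nf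
        _ ≤ |uu - ip p xx| + |ip p xx| := abs_add_le _ _
        _ ≤ (κ + 1) + c0 := add_le_add h3' h5
        _ = c0 + κ + 1 := by ring
    exact mem_Icc.mpr (abs_le.mp h6)
  have hscomp : IsCompact (Z 0 ∩ {q | 0 ≤ F q}) :=
    hQcomp.of_isClosed_subset hsclosed hssub
  have hinter : (Z 0 ∩ {q | 0 ≤ F q}) ∩ ⋂ k, Z k = ∅ := by
    rw [eq_empty_iff_forall_notMem]
    rintro ⟨dd, xx, uu⟩ ⟨⟨⟨hd, -, hle, -⟩, hFge⟩, hall⟩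
    rw [mem_iInter] at hall
    have hqeq : qf P xx = R ^ 2 := by
      refine le_antisymm hle ?_
      by_contra hlt
      push_neg at hlt
      obtain ⟨k, hk⟩ := exists_nat_one_div_lt (sub_pos.mpr hlt)
      have h7 := (hall k).2.1
      simp only [hZdef, mem_setOf_eq] at h7
      linarith
    have huκ : |uu - ip p xx| ≤ κ := by
      by_contra hgt
      push_neg at hgt
      obtain ⟨k, hk⟩ := exists_nat_one_div_lt (sub_pos.mpr hgt)
      have h8 := (hall k).2.2.2
      simp only [hZdef, mem_setOf_eq] at h8
      linarith
    have h9 := h33 dd hd xx uu hqeq huκ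
    have h10 : F (dd, xx, uu) < 0 := h9
    have hFge' : 0 ≤ F (dd, xx, uu) := hFge
    linarith [hFge', h10]
  obtain ⟨tfin, htfin⟩ := hscomp.elim_finite_subfamily_closed Z hZclosed hinter
  set k0 : ℕ := tfin.sup id with hk0def
  set η : ℝ := 1/(k0 + 1 : ℝ) with hηdef
  have hηpos : 0 < η := by positivity
  have hη1 : η ≤ 1 := by
    rw [hηdef, div_le_one (by positivity)]
    linarith [Nat.cast_nonneg (α := ℝ) k0]
  have hFneg : ∀ dd ∈ D, ∀ (xx : EuclideanSpace ℝ (Fin (n+1))) (uu : ℝ),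
      R ^ 2 - η ≤ qf P xx → qf P xx ≤ R ^ 2 →
      |uu - ip p xx| ≤ κ + η → F (dd, xx, uu) < 0 := by
    intro dd hd xx uu hq1 hq2 hu
    by_contra hge
    push_neg at hge
    have hmemZ : ∀ k ∈ tfin, (dd, xx, uu) ∈ Z k := by
      intro k hk
      have hkk0 : (k : ℝ) ≤ k0 := Nat.cast_le.mpr (Finset.le_sup (f := id) hk)
      have hηk : η ≤ 1/(k+1 : ℝ) := by
        rw [hηdef]
        apply one_div_le_one_div_of_le (by positivity)
        linarith
      exact ⟨hd, by linarith, hq2, by linarith⟩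
    have hmemZ0 : (dd, xx, uu) ∈ Z 0 := by
      have h01 : (1:ℝ)/((0:ℕ)+1:ℝ) = 1 := by norm_num
      refine ⟨hd, ?_, hq2, ?_⟩
      · rw [h01]; linarith
      · rw [h01]; linarith
    have hmem : (dd, xx, uu) ∈ (Z 0 ∩ {q | 0 ≤ F q}) ∩ ⋂ k ∈ tfin, Z k :=
      ⟨⟨hmemZ0, hge⟩, by rw [mem_iInter₂]; exact hmemZ⟩
    rw [htfin] at hmem
    exact hmem
  -- choice of the sampling bound
  refine ⟨η / (‖p‖ * L + 1), by positivity, ?_⟩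
  intro T hT0 hTrt d hdmeas hdD x y x' y' hx'int hy'int hx hy hx0 u0 hu0 hode t htIcc
  by_contra hcon
  push_neg at hcon
  have hprim : ContinuousOn (fun t => x 0 + ∫ s in (0:ℝ)..t, x' s) (Icc 0 T) := by
    have h := intervalIntegral.continuousOn_primitive_interval' hx'int
      (left_mem_uIcc (a := (0:ℝ)) (b := T))
    rw [uIcc_of_le hT0.le] at h
    exact continuousOn_const.add h
  have hXcont : ContinuousOn x (Icc 0 T) := hprim.congr hx
  have hWcont : ContinuousOn (fun s => qf P (x s)) (Icc 0 T) :=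
    (continuous_qf P).comp_continuousOn hXcont
  set Scr : Set ℝ := {s | s ∈ Icc (0:ℝ) T ∧ R ^ 2 ≤ qf P (x s)} with hScrdef
  have hScrclosed : IsClosed Scr := by
    have he : Scr = Icc (0:ℝ) T ∩ (fun s => qf P (x s)) ⁻¹' (Ici (R ^ 2)) := rfl
    rw [he]
    exact hWcont.preimage_isClosed_of_isClosed isClosed_Icc isClosed_Ici
  have hScrne : Scr.Nonempty := ⟨t, htIcc, hcon⟩
  have hScrbdd : BddBelow Scr := ⟨0, fun s hs => hs.1.1⟩
  set t₁ : ℝ := sInf Scr with ht₁def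
  have ht₁mem : t₁ ∈ Scr := hScrclosed.csInf_mem hScrne hScrbdd
  have ht₁Icc : t₁ ∈ Icc (0:ℝ) T := ht₁mem.1
  have hWt₁ : R ^ 2 ≤ qf P (x t₁) := ht₁mem.2
  have ht₁pos : 0 < t₁ := by
    rcases lt_or_eq_of_le ht₁Icc.1 with h | h
    · exact h
    · exfalso
      rw [← h] at hWt₁
      linarith
  have hbelow : ∀ s, 0 ≤ s → s < t₁ → qf P (x s) < R ^ 2 := by
    intro s hs0 hst
    by_contra hge
    push_neg at hge
    have hmem : s ∈ Scr := ⟨⟨hs0, hst.le.trans ht₁Icc.2⟩, hge⟩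
    exact absurd (csInf_le hScrbdd hmem) (not_le.mpr hst)
  have hIcoSub : Ico (0:ℝ) t₁ ⊆ Icc (0:ℝ) T :=
    fun s hs => ⟨hs.1, hs.2.le.trans ht₁Icc.2⟩
  have hWt₁le : qf P (x t₁) ≤ R ^ 2 := by
    have hnebot : (𝓝[Ico (0:ℝ) t₁] t₁).NeBot := by
      rw [← mem_closure_iff_nhdsWithin_neBot, closure_Ico ht₁pos.ne]
      exact ⟨ht₁pos.le, le_rfl⟩
    have htd : Tendsto (fun s => qf P (x s)) (𝓝[Ico (0:ℝ) t₁] t₁) (𝓝 (qf P (x t₁))) :=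
      (hWcont t₁ ht₁Icc).mono_left (nhdsWithin_mono _ hIcoSub)
    exact le_of_tendsto htd (eventually_of_mem self_mem_nhdsWithin
      fun s hs => (hbelow s hs.1 hs.2).le)
  have hWt₁eq : qf P (x t₁) = R ^ 2 := le_antisymm hWt₁le hWt₁
  have hWle : ∀ s ∈ Icc (0:ℝ) t₁, qf P (x s) ≤ R ^ 2 := by
    intro s hs
    rcases lt_or_eq_of_le hs.2 with h | h
    · exact (hbelow s hs.1 h).le
    · rw [h, hWt₁eq]
  have hae : ∀ᵐ s ∂(volume : Measure ℝ), s ∈ Icc (0:ℝ) T →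
      (x' s = mulVecE (matA (n+1)) (x s) + f (d s) (x s) u0 + u0 • vecb (n+1) ∧
       y' s = x s (Fin.last n) + g (d s) (x s) u0) :=
    (ae_restrict_iff' measurableSet_Icc).mp hode
  have hx0S : x 0 ∈ S := le_of_lt hx0
  have hu0κ : |u0 - ip p (x 0)| ≤ κ := by
    have h1 : u0 - ip p (x 0)
        = -(K * ip (cvec n p) (vecb (n+1)) * sat (ω * (y 0 + ip (cvec n p) (x 0)))) := by
      rw [hu0]; ring
    rw [h1, abs_neg, abs_mul, abs_mul, abs_of_pos hK]
    calc K * |ip (cvec n p) (vecb (n+1))| * |sat (ω * (y 0 + ip (cvec n p) (x 0)))|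
        ≤ K * |ip (cvec n p) (vecb (n+1))| * 1 :=
          mul_le_mul_of_nonneg_left (abs_sat_le_one _) (by positivity)
      _ = κ := by rw [mul_one]
  have hu0U : u0 ∈ Icc (-(c0 + κ + 1)) (c0 + κ + 1) := by
    have h2 : |u0| ≤ c0 + κ := by
      calc |u0| = |(u0 - ip p (x 0)) + ip p (x 0)| := by ring_nf
        _ ≤ |u0 - ip p (x 0)| + |ip p (x 0)| := abs_add_le _ _
        _ ≤ κ + c0 := add_le_add hu0κ (hc0 _ hx0S)
        _ = c0 + κ := by ring
    have h3 := abs_le.mp h2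
    exact mem_Icc.mpr ⟨by linarith [h3.1], by linarith [h3.2]⟩
  have hxS : ∀ s ∈ Icc (0:ℝ) t₁, x s ∈ S := fun s hs => hWle s hs
  have hdist : ∀ τ ∈ Icc (0:ℝ) t₁, ‖x τ - x 0‖ ≤ L * τ := by
    intro τ hτ
    have hτIcc : τ ∈ Icc (0:ℝ) T := ⟨hτ.1, hτ.2.trans ht₁Icc.2⟩
    have hxτ : x τ - x 0 = ∫ s in (0:ℝ)..τ, x' s := by
      rw [hx τ hτIcc]; abel
    rw [hxτ]
    have hbd : ∀ᵐ s ∂(volume : Measure ℝ), s ∈ uIoc (0:ℝ) τ → ‖x' s‖ ≤ L := by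
      filter_upwards [hae] with s hs hsΙ
      have hsIoc : s ∈ Ioc (0:ℝ) τ := by rwa [uIoc_of_le hτ.1] at hsΙ
      have hsIccT : s ∈ Icc (0:ℝ) T := ⟨hsIoc.1.le, hsIoc.2.trans hτIcc.2⟩
      obtain ⟨hxeq, -⟩ := hs hsIccT
      have hmem : (d s, x s, u0) ∈ D ×ˢ (S ×ˢ Icc (-(c0 + κ + 1)) (c0 + κ + 1)) :=
        ⟨hdD s hsIccT, hxS s ⟨hsIoc.1.le, hsIoc.2.trans hτ.2⟩, hu0U⟩
      calc ‖x' s‖ = ‖G (d s, x s, u0)‖ := by rw [hxeq]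
        _ ≤ L := hL _ hmem
    have hni := intervalIntegral.norm_integral_le_of_norm_le_const_ae hbd
    calc ‖∫ s in (0:ℝ)..τ, x' s‖ ≤ L * |τ - 0| := hni
      _ = L * τ := by rw [sub_zero, abs_of_nonneg hτ.1]
  have hu0x : ∀ τ ∈ Icc (0:ℝ) t₁, |u0 - ip p (x τ)| ≤ κ + η := by
    intro τ hτ
    have h1 : |u0 - ip p (x τ)| ≤ |u0 - ip p (x 0)| + |ip p (x 0) - ip p (x τ)| :=
      abs_sub_le _ _ _
    have h2 : |ip p (x 0) - ip p (x τ)| ≤ ‖p‖ * ‖x 0 - x τ‖ := abs_ip_sub_le p _ _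
    have h3 : ‖x 0 - x τ‖ = ‖x τ - x 0‖ := norm_sub_rev _ _
    have h4 : ‖x τ - x 0‖ ≤ L * τ := hdist τ hτ
    have h5 : τ ≤ η / (‖p‖ * L + 1) := hτ.2.trans (ht₁Icc.2.trans hTrt)
    have h6 : ‖p‖ * (L * τ) ≤ η := by
      have hp0 : (0:ℝ) ≤ ‖p‖ := norm_nonneg p
      have h7 : ‖p‖ * L * τ ≤ ‖p‖ * L * (η / (‖p‖ * L + 1)) :=
        mul_le_mul_of_nonneg_left h5 (by positivity)
      have h8 : ‖p‖ * L * (η / (‖p‖ * L + 1)) ≤ η := by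
        have h9 : ‖p‖ * L / (‖p‖ * L + 1) ≤ 1 := by
          rw [div_le_one (by positivity)]
          linarith
        calc ‖p‖ * L * (η / (‖p‖ * L + 1)) = η * (‖p‖ * L / (‖p‖ * L + 1)) := by ring
          _ ≤ η * 1 := mul_le_mul_of_nonneg_left h9 hηpos.le
          _ = η := mul_one η
      nlinarith
    have h10 : ‖p‖ * ‖x 0 - x τ‖ ≤ η := by
      rw [h3]
      calc ‖p‖ * ‖x τ - x 0‖ ≤ ‖p‖ * (L * τ) :=
        mul_le_mul_of_nonneg_left h4 (norm_nonneg p)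
        _ ≤ η := h6
    linarith [hu0κ, h1, h2]
  have hcwa : ContinuousWithinAt (fun s => qf P (x s)) (Icc (0:ℝ) T) t₁ := hWcont t₁ ht₁Icc
  have htend : Tendsto (fun s => qf P (x s)) (𝓝[Icc (0:ℝ) T] t₁) (𝓝 (R ^ 2)) := by
    rw [← hWt₁eq]; exact hcwa
  have hev : ∀ᶠ s in 𝓝[Icc (0:ℝ) T] t₁, R ^ 2 - η < qf P (x s) :=
    htend (Ioi_mem_nhds (by linarith))
  rw [eventually_nhdsWithin_iff, Metric.eventually_nhds_iff] at hev
  obtain ⟨ε, hε, hball⟩ := hev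
  set s0 : ℝ := max (t₁ - ε/2) (t₁/2) with hs0def
  have hs0lt : s0 < t₁ := max_lt (by linarith) (by linarith)
  have hs00 : 0 ≤ s0 := le_max_of_le_right (by linarith)
  have hs0Icc : s0 ∈ Icc (0:ℝ) T := ⟨hs00, hs0lt.le.trans ht₁Icc.2⟩
  have hs0w : ∀ τ ∈ Icc s0 t₁, R ^ 2 - η < qf P (x τ) := by
    intro τ hτ
    rcases eq_or_lt_of_le hτ.2 with h | h
    · rw [h, hWt₁eq]; linarith
    · apply hball
      · rw [Real.dist_eq, abs_of_nonpos (by linarith)]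
        have hge : t₁ - ε/2 ≤ s0 := le_max_left _ _
        have hτ1 : s0 ≤ τ := hτ.1
        linarith
      · exact ⟨hs00.trans hτ.1, (hτ.2.trans ht₁Icc.2)⟩
  have hPsymm : Pᵀ = P := by
    ext i j
    have h := congrFun (congrFun hP.1 i) j
    simpa [Matrix.conjTranspose_apply, Matrix.transpose_apply] using h
  have hWid := qf_identity P hPsymm x' hx'int x hx
  have hΦt₁ : IntervalIntegrable (fun s => 2 * ip (x s) (mulVecE P (x' s))) volume 0 t₁ := by
    refine phi_integrable P (hXcont.mono ?_) (hx'int.mono_set ?_)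
    · rw [uIcc_of_le ht₁pos.le]
      exact Icc_subset_Icc le_rfl ht₁Icc.2
    · rw [uIcc_of_le ht₁pos.le, uIcc_of_le hT0.le]
      exact Icc_subset_Icc le_rfl ht₁Icc.2
  have hΦs0 : IntervalIntegrable (fun s => 2 * ip (x s) (mulVecE P (x' s))) volume 0 s0 := by
    refine phi_integrable P (hXcont.mono ?_) (hx'int.mono_set ?_)
    · rw [uIcc_of_le hs00]
      exact Icc_subset_Icc le_rfl hs0Icc.2
    · rw [uIcc_of_le hs00, uIcc_of_le hT0.le]
      exact Icc_subset_Icc le_rfl hs0Icc.2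
  have hWsub : qf P (x t₁) - qf P (x s0)
      = ∫ s in s0..t₁, 2 * ip (x s) (mulVecE P (x' s)) := by
    rw [hWid t₁ ht₁Icc, hWid s0 hs0Icc]
    have h := intervalIntegral.integral_interval_sub_left hΦt₁ hΦs0
    linarith [h]
  have hintneg : (∫ s in s0..t₁, 2 * ip (x s) (mulVecE P (x' s))) ≤ 0 := by
    rw [intervalIntegral.integral_of_le hs0lt.le]
    refine integral_nonpos_of_ae ?_
    have hode' : ∀ᵐ s ∂(volume.restrict (Ioc s0 t₁)), s ∈ Icc (0:ℝ) T →
        (x' s = mulVecE (matA (n+1)) (x s) + f (d s) (x s) u0 + u0 • vecb (n+1) ∧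
         y' s = x s (Fin.last n) + g (d s) (x s) u0) := ae_restrict_of_ae hae
    filter_upwards [hode', ae_restrict_mem measurableSet_Ioc] with s hsode hsIoc
    have hsIcct₁ : s ∈ Icc (0:ℝ) t₁ := ⟨hs00.trans hsIoc.1.le, hsIoc.2⟩
    have hsIccT : s ∈ Icc (0:ℝ) T := ⟨hsIcct₁.1, hsIcct₁.2.trans ht₁Icc.2⟩
    obtain ⟨hxeq, -⟩ := hsode hsIccT
    have hF := hFneg (d s) (hdD s hsIccT) (x s) u0
      (le_of_lt (hs0w s ⟨hsIoc.1.le, hsIoc.2⟩)) (hWle s hsIcct₁) (hu0x s hsIcct₁)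
    have hΦeq : 2 * ip (x s) (mulVecE P (x' s)) = 2 * F (d s, x s, u0) := by
      rw [hxeq]
    rw [hΦeq]
    simp only [Pi.zero_apply]
    linarith
  have hWs0 : qf P (x s0) < R ^ 2 := hbelow s0 hs00 hs0lt
  linarith [hWt₁eq, hWs0, hintneg, hWsub]
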